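/- Let α be a continuous partial action of a monoid M on a topological space X such that dom(u) is closed (respectively open) in X for every u ∈ M. Then the canonical map X → Y into the topological globalization is a closed (respectively open) embedding. -/
import Mathlib

open Topology

/-- The generating relation `(u*v, x) ∼ (u, v·x)` (whenever `v·x` is defined)
on `M × X`, whose generated equivalence defines the globalization. -/
def Sim {M X : Type*} [Monoid M] (α : M → X → Option X) :
    M × X → M × X → Prop := fun p q =>
  ∃ u v : M, p.1 = u * v ∧ q.1 = u ∧ α v p.2 = some q.2

/-- The (set-theoretic) globalization `Y = (M × X)/≃`. -/
def Glob {M X : Type*} [Monoid M] (α : M → X → Option X) : Type _ :=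
  Quot (Relation.EqvGen (Sim α))

/-- The class of `(u, x)` in the globalization. -/
def Glob.mk {M X : Type*} [Monoid M] (α : M → X → Option X) (p : M × X) : Glob α :=
  Quot.mk _ p

/-- The topological globalization: the final topology on `Y` with respect to
all the maps `x ↦ [u, x]`, `u ∈ M`. -/
instance {M X : Type*} [Monoid M] (α : M → X → Option X) [t : TopologicalSpace X] :
    TopologicalSpace (Glob α) :=
  ⨆ u : M, TopologicalSpace.coinduced (fun x : X => Glob.mk α (u, x)) t

lemma glob_invariant {M X : Type*} [Monoid M] {α : M → X → Option X}
    (hmul : ∀ (u v : M) (x y : X), α v x = some y → α (u * v) x = α u y) :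
    ∀ a b : M × X, Relation.EqvGen (Sim α) a b → α a.1 a.2 = α b.1 b.2 := by
  intro a b h
  induction h with
  | rel a b h =>
    obtain ⟨u, v, h1, h2, h3⟩ := h
    rw [h1, h2]
    exact hmul u v _ _ h3
  | refl => rfl
  | symm _ _ _ ih => exact ih.symm
  | trans _ _ _ _ _ ih1 ih2 => exact ih1.trans ih2

lemma glob_mk_eq_iff {M X : Type*} [Monoid M] {α : M → X → Option X}
    (hunit : ∀ x, α 1 x = some x)
    (hmul : ∀ (u v : M) (x y : X), α v x = some y → α (u * v) x = α u y)
    (u : M) (x c : X) :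
    Glob.mk α (u, x) = Glob.mk α (1, c) ↔ α u x = some c := by
  constructor
  · intro h
    have := congrArg (Quot.lift (fun p : M × X => α p.1 p.2)
      (glob_invariant hmul)) h
    simpa [Glob.mk, hunit] using this
  · intro h
    exact Quot.sound (Relation.EqvGen.rel _ _ ⟨1, u, (one_mul u).symm, rfl, h⟩)

lemma glob_preimage_range {M X : Type*} [Monoid M] {α : M → X → Option X}
    (hunit : ∀ x, α 1 x = some x)
    (hmul : ∀ (u v : M) (x y : X), α v x = some y → α (u * v) x = α u y)
    (u : M) (C : Set X) :
    (fun x : X => Glob.mk α (u, x)) ⁻¹' ((fun x : X => Glob.mk α (1, x)) '' C)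
      = {x | (α u x).isSome} ∩ (fun x => (α u x).getD x) ⁻¹' C := by
  ext x
  simp only [Set.mem_preimage, Set.mem_image, Set.mem_inter_iff, Set.mem_setOf_eq]
  constructor
  · rintro ⟨c, hc, hx⟩
    have h := (glob_mk_eq_iff hunit hmul u x c).1 hx.symm
    rw [h]
    exact ⟨rfl, hc⟩
  · rintro ⟨hs, hc⟩
    obtain ⟨c, hcx⟩ := Option.isSome_iff_exists.1 hs
    refine ⟨c, ?_, ((glob_mk_eq_iff hunit hmul u x c).2 hcx).symm⟩
    rwa [hcx] at hc
    
lemma glob_isOpen_iff {M X : Type*} [Monoid M] (α : M → X → Option X)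
    [TopologicalSpace X] (V : Set (Glob α)) :
    IsOpen V ↔ ∀ u : M, IsOpen ((fun x : X => Glob.mk α (u, x)) ⁻¹' V) := by
  rw [isOpen_iSup_iff]
  exact forall_congr' fun u => Iff.rfl

lemma glob_isClosed_iff {M X : Type*} [Monoid M] (α : M → X → Option X)
    [TopologicalSpace X] (V : Set (Glob α)) :
    IsClosed V ↔ ∀ u : M, IsClosed ((fun x : X => Glob.mk α (u, x)) ⁻¹' V) := by
  simp only [← isOpen_compl_iff, glob_isOpen_iff, Set.preimage_compl]

/-- For a continuous partial action of a monoid `M` on a topological space `X`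
with all domains `dom(u)` closed (resp. open), the canonical map `X → Y`,
`x ↦ [e, x]`, into the topological globalization is a closed (resp. open)
embedding. -/
theorem stmt_9 {M X : Type*} [Monoid M] [TopologicalSpace X]
    (α : M → X → Option X)
    (hunit : ∀ x, α 1 x = some x)
    (hmul : ∀ (u v : M) (x y : X), α v x = some y → α (u * v) x = α u y)
    (hcont : ∀ u : M, ContinuousOn (fun x => (α u x).getD x) {x | (α u x).isSome}) :
    ((∀ u : M, IsClosed {x | (α u x).isSome}) →
      IsClosedEmbedding (fun x : X => Glob.mk α (1, x))) ∧
    ((∀ u : M, IsOpen {x | (α u x).isSome}) →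
      IsOpenEmbedding (fun x : X => Glob.mk α (1, x))) := by
  have hcontι : Continuous (fun x : X => Glob.mk α (1, x)) :=
    continuous_iff_coinduced_le.2 (le_iSup (fun u : M =>
      TopologicalSpace.coinduced (fun x : X => Glob.mk α (u, x)) ‹_›) 1)
  have hinj : Function.Injective (fun x : X => Glob.mk α (1, x)) := by
    intro x y h
    have := (glob_mk_eq_iff hunit hmul 1 x y).1 h
    rw [hunit] at this
    exact Option.some_injective _ this
  constructor
  · intro hdom
    refine IsClosedEmbedding.of_continuous_injective_isClosedMap hcontι hinj ?_
    intro C hC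
    rw [glob_isClosed_iff]
    intro u
    rw [glob_preimage_range hunit hmul]
    exact (hcont u).preimage_isClosed_of_isClosed (hdom u) hC
  · intro hdom
    refine IsOpenEmbedding.of_continuous_injective_isOpenMap hcontι hinj ?_
    intro C hC
    rw [glob_isOpen_iff]
    intro u
    rw [glob_preimage_range hunit hmul]
    exact (hcont u).isOpen_inter_preimage (hdom u) hC
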